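/- Neither the sequence 010101… nor the sequence 101010… belongs to the Thue-Morse subshift 𝕂. -/
import Mathlib


open Filter Topology MeasureTheory

/-- The left shift on the full 2-shift `Σ = {0,1}^ℕ`. -/
def shift (x : ℕ → Bool) : ℕ → Bool := fun n => x (n + 1)

/-- The Thue–Morse substitution `H : 0 → 01, 1 → 10`, acting on sequences. -/
def subH (x : ℕ → Bool) : ℕ → Bool :=
  fun n => if n % 2 = 0 then x (n / 2) else !x (n / 2)

/-- The Thue–Morse sequence: `tm n` is the parity of the number of 1s in
the binary expansion of `n`. -/
def tm (n : ℕ) : Bool := (Nat.digits 2 n).count 1 % 2 == 1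

/-- The fixed point of `subH` starting with 0. -/
def rho0 : ℕ → Bool := tm

/-- The fixed point of `subH` starting with 1. -/
def rho1 : ℕ → Bool := fun n => !tm n

/-- `rhoB b` is the fixed point of `subH` starting with digit `b`. -/
def rhoB : Bool → ℕ → Bool
  | false => rho0
  | true => rho1

/-- The digit-flipping involution. -/
def flipSeq (x : ℕ → Bool) : ℕ → Bool := fun n => !x n

/-- Prepend a digit to a sequence. -/
def consTM (a : Bool) (x : ℕ → Bool) : ℕ → Bool
  | 0 => a
  | n + 1 => x n

/-- The Thue–Morse subshift: the closure of the shift orbit of `rho0`. -/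
def TMK : Set (ℕ → Bool) := closure {y | ∃ n, y = shift^[n] rho0}

/-- The renormalization operator `𝓡V = V ∘ σ ∘ H + V ∘ H`. -/
def RenOp (V : (ℕ → Bool) → ℝ) : (ℕ → Bool) → ℝ :=
  fun x => V (shift (subH x)) + V (subH x)

/-- The Birkhoff sum `S_k V = ∑_{i<k} V ∘ σⁱ`. -/
def birkhoff (V : (ℕ → Bool) → ℝ) (k : ℕ) (x : ℕ → Bool) : ℝ :=
  ∑ i ∈ Finset.range k, V (shift^[i] x)

/-- The potential `U_c`: value `c` on `[01]`, `-c` on `[10]`, `0` on `[00] ∪ [11]`. -/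
def Upot (c : ℝ) (x : ℕ → Bool) : ℝ :=
  if x 0 = false ∧ x 1 = true then c
  else if x 0 = true ∧ x 1 = false then -c else 0

/-- The sliding block code `π(x)_k = 1` iff `x_k ≠ x_{k+1}`. -/
def piTM (x : ℕ → Bool) : ℕ → Bool := fun n => x n != x (n + 1)

/-- The Feigenbaum substitution `0 → 11, 1 → 10`, acting on sequences. -/
def subHfeig (x : ℕ → Bool) : ℕ → Bool :=
  fun n => if n % 2 = 0 then true else !x (n / 2)



lemma tm_two_mul (k : ℕ) : tm (2 * k) = tm k := by
  rcases Nat.eq_zero_or_pos k with h | h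
  · simp [h]
  · unfold tm
    rw [Nat.digits_def' (by norm_num : 1 < 2) (by omega : 0 < 2 * k),
        Nat.mul_mod_right, Nat.mul_div_cancel_left _ (by norm_num : 0 < 2)]
    simp

lemma succ_mod_two_bool (c : ℕ) : ((c + 1) % 2 == 1) = !(c % 2 == 1) := by
  rcases Nat.mod_two_eq_zero_or_one c with h | h <;>
    rw [Nat.add_mod, h] <;> rfl

lemma tm_two_mul_add_one (k : ℕ) : tm (2 * k + 1) = !tm k := by
  unfold tm
  rw [Nat.digits_def' (by norm_num : 1 < 2) (by omega : 0 < 2 * k + 1)]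
  have h1 : (2 * k + 1) % 2 = 1 := by omega
  have h2 : (2 * k + 1) / 2 = k := by omega
  rw [h1, h2, List.count_cons, if_pos (by decide : (1 == 1) = true), succ_mod_two_bool]

lemma tm_no_three (m : ℕ) : ¬(tm m = tm (m + 1) ∧ tm (m + 1) = tm (m + 2)) := by
  rcases Nat.even_or_odd m with ⟨k, hk⟩ | ⟨k, hk⟩
  · have a0 : tm m = tm k := by rw [show m = 2 * k by omega]; exact tm_two_mul k
    have a1 : tm (m + 1) = !tm k := by
      rw [show m + 1 = 2 * k + 1 by omega]; exact tm_two_mul_add_one k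
    rintro ⟨h, -⟩
    rw [a0, a1] at h
    simp at h
  · have a1 : tm (m + 1) = tm (k + 1) := by
      rw [show m + 1 = 2 * (k + 1) by omega]; exact tm_two_mul _
    have a2 : tm (m + 2) = !tm (k + 1) := by
      rw [show m + 2 = 2 * (k + 1) + 1 by omega]; exact tm_two_mul_add_one _
    rintro ⟨-, h⟩
    rw [a1, a2] at h
    simp at h

lemma tm_no_four_alt (n : ℕ) :
    ¬(tm n ≠ tm (n + 1) ∧ tm (n + 1) ≠ tm (n + 2) ∧ tm (n + 2) ≠ tm (n + 3) ∧
      tm (n + 3) ≠ tm (n + 4)) := by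
  rcases Nat.even_or_odd n with ⟨k, hk⟩ | ⟨k, hk⟩
  · have a1 : tm (n + 1) = !tm k := by
      rw [show n + 1 = 2 * k + 1 by omega]; exact tm_two_mul_add_one _
    have a2 : tm (n + 2) = tm (k + 1) := by
      rw [show n + 2 = 2 * (k + 1) by omega]; exact tm_two_mul _
    have a3 : tm (n + 3) = !tm (k + 1) := by
      rw [show n + 3 = 2 * (k + 1) + 1 by omega]; exact tm_two_mul_add_one _
    have a4 : tm (n + 4) = tm (k + 2) := by
      rw [show n + 4 = 2 * (k + 2) by omega]; exact tm_two_mul _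
    rintro ⟨-, h2, -, h4⟩
    rw [a1, a2] at h2
    rw [a3, a4] at h4
    apply tm_no_three k
    refine ⟨?_, ?_⟩
    · cases hb : tm k <;> cases hc : tm (k + 1) <;> simp_all
    · cases hb : tm (k + 1) <;> cases hc : tm (k + 2) <;> simp_all
  · have a0 : tm n = !tm k := by
      rw [show n = 2 * k + 1 by omega]; exact tm_two_mul_add_one _
    have a1 : tm (n + 1) = tm (k + 1) := by
      rw [show n + 1 = 2 * (k + 1) by omega]; exact tm_two_mul _
    have a2 : tm (n + 2) = !tm (k + 1) := by
      rw [show n + 2 = 2 * (k + 1) + 1 by omega]; exact tm_two_mul_add_one _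
    have a3 : tm (n + 3) = tm (k + 2) := by
      rw [show n + 3 = 2 * (k + 2) by omega]; exact tm_two_mul _
    rintro ⟨h1, -, h3, -⟩
    rw [a0, a1] at h1
    rw [a2, a3] at h3
    apply tm_no_three k
    refine ⟨?_, ?_⟩
    · cases hb : tm k <;> cases hc : tm (k + 1) <;> simp_all
    · cases hb : tm (k + 1) <;> cases hc : tm (k + 2) <;> simp_all

lemma shift_iter_apply (x : ℕ → Bool) (n k : ℕ) : shift^[n] x k = x (n + k) := by
  induction n generalizing x k with
  | zero => simp
  | succ m ih =>
      rw [Function.iterate_succ_apply, ih]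
      simp only [shift]
      congr 1
      omega

/-- neither `0101…` nor `1010…` belongs to the Thue-Morse subshift. -/
theorem stmt6 :
    (fun n : ℕ => decide (n % 2 = 1)) ∉ TMK ∧
    (fun n : ℕ => decide (n % 2 = 0)) ∉ TMK := by
  have hopen : IsOpen {x : ℕ → Bool | x 0 ≠ x 1 ∧ x 1 ≠ x 2 ∧ x 2 ≠ x 3 ∧ x 3 ≠ x 4} := by
    have h01 : IsOpen {x : ℕ → Bool | x 0 ≠ x 1} :=
      isOpen_ne_fun (continuous_apply 0) (continuous_apply 1)
    have h12 : IsOpen {x : ℕ → Bool | x 1 ≠ x 2} :=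
      isOpen_ne_fun (continuous_apply 1) (continuous_apply 2)
    have h23 : IsOpen {x : ℕ → Bool | x 2 ≠ x 3} :=
      isOpen_ne_fun (continuous_apply 2) (continuous_apply 3)
    have h34 : IsOpen {x : ℕ → Bool | x 3 ≠ x 4} :=
      isOpen_ne_fun (continuous_apply 3) (continuous_apply 4)
    have heq : {x : ℕ → Bool | x 0 ≠ x 1 ∧ x 1 ≠ x 2 ∧ x 2 ≠ x 3 ∧ x 3 ≠ x 4}
        = {x : ℕ → Bool | x 0 ≠ x 1} ∩ ({x | x 1 ≠ x 2} ∩ ({x | x 2 ≠ x 3} ∩ {x | x 3 ≠ x 4})) := by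
      ext x
      simp [Set.mem_inter_iff, and_assoc]
    rw [heq]
    exact h01.inter (h12.inter (h23.inter h34))
  have hsub : TMK ⊆ {x : ℕ → Bool | x 0 ≠ x 1 ∧ x 1 ≠ x 2 ∧ x 2 ≠ x 3 ∧ x 3 ≠ x 4}ᶜ := by
    apply closure_minimal _ (isClosed_compl_iff.mpr hopen)
    rintro y ⟨n, rfl⟩ hy
    obtain ⟨h1, h2, h3, h4⟩ := hy
    simp only [shift_iter_apply, rho0] at h1 h2 h3 h4
    exact tm_no_four_alt n ⟨h1, h2, h3, h4⟩
  constructor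
  · intro hmem
    apply hsub hmem
    refine ⟨?_, ?_, ?_, ?_⟩ <;> decide
  · intro hmem
    apply hsub hmem
    refine ⟨?_, ?_, ?_, ?_⟩ <;> decide
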